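/- Let X_1, …, X_M with M > d² − 1 span the (d²−1)-dimensional space su(d), and define W(θ) = exp(Σ_j θ_j X_j). Then there exists θ ∈ ℝ^M at which the differential of W has rank strictly less than d² − 1; i.e., the overparameterized SU(d)-gate ansatz has singular points. -/

import Mathlib

open Matrix
open scoped Matrix.Norms.L2Operator

set_option maxHeartbeats 2000000

/-- Let `X₁, …, X_M` with `M > d² − 1` span the `(d²−1)`-dimensional Lie
algebra `su(d)` of traceless skew-Hermitian matrices, and let
`W(θ) = exp(Σ_j θ_j X_j)`.  Then there is a point `θ` at which the differential of `W` has
rank strictly less than `d² − 1`: the overparameterized `SU(d)`-gate ansatz has singular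
points. -/
theorem overparameterized_su_gate_ansatz_has_singular_points
    {d M : ℕ} (hd : 2 ≤ d) (hM : d ^ 2 - 1 < M)
    (X : Fin M → Matrix (Fin d) (Fin d) ℂ)
    (hskew : ∀ j, (X j)ᴴ = -(X j)) (htr : ∀ j, (X j).trace = 0)
    (hspan : ∀ A : Matrix (Fin d) (Fin d) ℂ, Aᴴ = -A → A.trace = 0 →
      A ∈ Submodule.span ℝ (Set.range X)) :
    ∃ θ : Fin M → ℝ,
      Module.finrank ℝ
          (LinearMap.range
            (fderiv ℝ
              (fun θ : Fin M → ℝ => NormedSpace.exp (∑ j, θ j • X j)) θ).toLinearMap) <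
        d ^ 2 - 1 := by
  classical
  have hd0 : 0 < d := by omega
  obtain ⟨z0, hz0def⟩ : ∃ z : Fin d, z = ⟨0, by omega⟩ := ⟨_, rfl⟩
  obtain ⟨z1, hz1def⟩ : ∃ z : Fin d, z = ⟨1, by omega⟩ := ⟨_, rfl⟩
  have hne : z0 ≠ z1 := by simp [hz0def, hz1def, Fin.ext_iff]
  have hne' : z1 ≠ z0 := hne.symm
  obtain ⟨cπ, hcπdef⟩ : ∃ c : ℂ, c = (Real.pi : ℂ) * Complex.I := ⟨_, rfl⟩
  have hcπne : cπ ≠ 0 := by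
    simp [hcπdef, Complex.ext_iff, Real.pi_ne_zero]
  obtain ⟨v, hvdef⟩ : ∃ v : Fin d → ℂ,
      v = fun k => if k = z0 then cπ else if k = z1 then -cπ else 0 := ⟨_, rfl⟩
  have hv0 : v z0 = cπ := by simp [hvdef]
  have hv1 : v z1 = -cπ := by simp [hvdef, hne']
  have hvo : ∀ k, k ≠ z0 → k ≠ z1 → v k = 0 := by intro k h1 h2; simp [hvdef, h1, h2]
  obtain ⟨A0, hA0def⟩ : ∃ A : Matrix (Fin d) (Fin d) ℂ, A = Matrix.diagonal v := ⟨_, rfl⟩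
  obtain ⟨u, hudef⟩ : ∃ u : Matrix (Fin d) (Fin d) ℂ,
      u = Matrix.of (fun i j => if i = z0 ∧ j = z1 then 1 else
        if i = z1 ∧ j = z0 then -1 else 0) := ⟨_, rfl⟩
  have hu_apply : ∀ i j, u i j = if i = z0 ∧ j = z1 then 1 else
      if i = z1 ∧ j = z0 then -1 else 0 := by intro i j; rw [hudef]; rfl
  obtain ⟨u', hu'def⟩ : ∃ w : Matrix (Fin d) (Fin d) ℂ, w = u * A0 - A0 * u := ⟨_, rfl⟩
  -- skewness and tracelessness
  have hstarv : star v = -v := by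
    funext k
    rw [Pi.star_apply, Pi.neg_apply]
    by_cases h1 : k = z0
    · rw [h1, hv0]; simp [hcπdef, Complex.ext_iff]
    · by_cases h2 : k = z1
      · rw [h2, hv1]; simp [hcπdef, Complex.ext_iff]
      · rw [hvo k h1 h2]; simp
  have hA0skew : A0ᴴ = -A0 := by
    rw [hA0def, Matrix.diagonal_conjTranspose, hstarv]
    exact (Matrix.diagonal_neg v).symm
  have hA0tr : A0.trace = 0 := by
    rw [hA0def, Matrix.trace_diagonal]
    have hv' : ∀ k, v k = (if k = z0 then cπ else 0) + (if k = z1 then -cπ else 0) := by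
      intro k
      by_cases h1 : k = z0
      · subst h1; rw [hv0]; simp [hne]
      · by_cases h2 : k = z1
        · subst h2; rw [hv1]; simp [hne']
        · rw [hvo k h1 h2]; simp [h1, h2]
    simp [hv', Finset.sum_add_distrib]
  have huconj : uᴴ = -u := by
    ext i j
    rw [Matrix.conjTranspose_apply, Matrix.neg_apply, hu_apply, hu_apply]
    split_ifs <;> simp_all
  have hu'skew : u'ᴴ = -u' := by
    rw [hu'def, Matrix.conjTranspose_sub, Matrix.conjTranspose_mul, Matrix.conjTranspose_mul,
      huconj, hA0skew]
    noncomm_ring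
  have hu'tr : u'.trace = 0 := by
    rw [hu'def, Matrix.trace_sub, Matrix.trace_mul_comm]
    ring
  have hu'ne : u' ≠ 0 := by
    intro h
    have h2 : u' z0 z1 = 0 := by rw [h]; simp
    rw [hu'def, hA0def] at h2
    simp only [Matrix.sub_apply, Matrix.mul_diagonal, Matrix.diagonal_mul, hu_apply,
      hv0, hv1] at h2
    simp [hne, hne'] at h2
    exact hcπne (by linear_combination -h2/2)
  -- the exponential of A0
  obtain ⟨w, hwdef⟩ : ∃ w : Fin d → ℂ, w = fun k => if k = z0 ∨ k = z1 then -1 else 1 := ⟨_, rfl⟩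
  have hw0 : w z0 = -1 := by simp [hwdef]
  have hw1 : w z1 = -1 := by simp [hwdef]
  obtain ⟨Dw, hDwdef⟩ : ∃ D : Matrix (Fin d) (Fin d) ℂ, D = Matrix.diagonal w := ⟨_, rfl⟩
  have hexpA0 : NormedSpace.exp A0 = Dw := by
    have hvw : NormedSpace.exp v = w := by
      funext k
      rw [Pi.coe_exp, ← Complex.exp_eq_exp_ℂ]
      by_cases h1 : k = z0
      · rw [h1, hv0, hwdef]; simp [hcπdef, Complex.exp_pi_mul_I]
      · by_cases h2 : k = z1
        · rw [h2, hv1, hwdef]; simp [hcπdef, Complex.exp_neg, Complex.exp_pi_mul_I, hne', inv_neg, inv_one]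
        · rw [hvo k h1 h2, hwdef]; simp [h1, h2]
    rw [hA0def, Matrix.exp_diagonal, hvw, hDwdef]
  have hDwu : Dw * u = u * Dw := by
    rw [hDwdef]
    ext i j
    rw [Matrix.diagonal_mul, Matrix.mul_diagonal, hu_apply]
    split_ifs with h1 h2
    · obtain ⟨rfl, rfl⟩ := h1; rw [hw0, hw1]; ring
    · obtain ⟨rfl, rfl⟩ := h2; rw [hw0, hw1]
    · ring
  -- the one-parameter family
  obtain ⟨E, hEdef⟩ : ∃ E : Matrix (Fin d) (Fin d) ℂ → Matrix (Fin d) (Fin d) ℂ,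
      E = NormedSpace.exp := ⟨_, rfl⟩
  have hEC : E = NormedSpace.exp := by rw [hEdef]
  have hexpA0' : E A0 = Dw := by rw [hEC]; exact hexpA0
  have hPadd : ∀ s t : ℝ, E ((s + t) • u) = E (s • u) * E (t • u) := by
    intro s t
    rw [hEdef, add_smul]
    exact Matrix.exp_add_of_commute _ _ (((Commute.refl u).smul_left s).smul_right t)
  have hEzero : E 0 = 1 := by rw [hEdef]; exact NormedSpace.exp_zero
  have hPzero : E ((0 : ℝ) • u) = 1 := by rw [zero_smul]; exact hEzero
  have hPinv : ∀ t : ℝ, E (t • u) * E ((-t) • u) = 1 := by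
    intro t; rw [← hPadd]; simp [hEzero]
  have hPinv' : ∀ t : ℝ, E ((-t) • u) * E (t • u) = 1 := by
    intro t; rw [← hPadd]; simp [hEzero]
  obtain ⟨A, hAdef⟩ : ∃ A : ℝ → Matrix (Fin d) (Fin d) ℂ,
      A = fun t => E (t • u) * A0 * E ((-t) • u) := ⟨_, rfl⟩
  have hA00 : A 0 = A0 := by rw [hAdef]; simp [hEzero]
  have hEconj : ∀ (P Q B : Matrix (Fin d) (Fin d) ℂ), P * Q = 1 → Q * P = 1 →
      E (P * B * Q) = P * E B * Q := by
    intro P Q B k1 k2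
    rw [hEdef]
    have h := Matrix.exp_units_conj (⟨P, Q, k1, k2⟩ : (Matrix (Fin d) (Fin d) ℂ)ˣ) B
    simpa using h
  have hAconst : ∀ t, E (A t) = Dw := by
    intro t
    rw [hAdef]
    show E (E (t • u) * A0 * E ((-t) • u)) = Dw
    rw [hEconj _ _ _ (hPinv t) (hPinv' t), hexpA0']
    have hc : Dw * E (t • u) = E (t • u) * Dw := by
      rw [hEdef]
      exact (((show Commute Dw u from hDwu).smul_right t).exp_right)
    rw [← hc, mul_assoc, hPinv t, mul_one]
  -- derivatives
  have hP' : HasDerivAt (fun s : ℝ => E (s • u)) u 0 := by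
    rw [hEdef]
    simpa using hasDerivAt_exp_smul_const (𝕂 := ℝ) u (0 : ℝ)
  have hQ' : HasDerivAt (fun t : ℝ => E ((-t) • u)) (-u) 0 := by
    rw [hEdef]
    have h := hasDerivAt_exp_smul_const (𝕂 := ℝ) (-u) (0 : ℝ)
    simp only [neg_smul, smul_neg] at h ⊢
    simpa using h
  have hA' : HasDerivAt A u' 0 := by
    have h1 : HasDerivAt (fun t : ℝ => E (t • u) * A0) (u * A0) 0 := by
      simpa using hP'.mul_const A0
    have h2 := h1.mul hQ'
    rw [hAdef]
    refine h2.congr_deriv ?_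
    rw [hu'def]
    simp only [neg_zero, hPzero, hEzero, zero_smul]
    noncomm_ring
  have hduE : DifferentiableAt ℝ E A0 := by
    rw [hEdef]; exact (NormedSpace.exp_analytic (𝕂 := ℝ) A0).differentiableAt
  have hDexp : HasFDerivAt E (fderiv ℝ E A0) A0 := hduE.hasFDerivAt
  have hkill : fderiv ℝ E A0 u' = 0 := by
    have hl : HasFDerivAt E (fderiv ℝ E A0) (A 0) := by rw [hA00]; exact hDexp
    have hc := hl.comp_hasDerivAt 0 hA'
    have hconstD : HasDerivAt (fun t : ℝ => E (A t)) 0 0 := by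
      have hfun : (fun t : ℝ => E (A t)) = fun _ => Dw := funext fun t => hAconst t
      rw [hfun]; exact hasDerivAt_const _ _
    exact hc.unique hconstD
  -- the submodule of traceless skew-hermitian matrices
  let SU : Submodule ℝ (Matrix (Fin d) (Fin d) ℂ) :=
    { carrier := {B | Bᴴ = -B ∧ B.trace = 0}
      add_mem' := fun {a b} ha hb => by
        refine ⟨?_, ?_⟩
        · rw [Matrix.conjTranspose_add, ha.1, hb.1, neg_add]
        · rw [Matrix.trace_add, ha.2, hb.2, add_zero]
      zero_mem' := by constructor <;> simp
      smul_mem' := fun c a ha => by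
        refine ⟨?_, ?_⟩
        · rw [Matrix.conjTranspose_smul, ha.1]
          simp
        · rw [Matrix.trace_smul, ha.2, smul_zero] }
  have hmemSU : ∀ B : Matrix (Fin d) (Fin d) ℂ, B ∈ SU ↔ (Bᴴ = -B ∧ B.trace = 0) :=
    fun B => Iff.rfl
  obtain ⟨lst, hlstdef⟩ : ∃ z : Fin d, z = ⟨d - 1, by omega⟩ := ⟨_, rfl⟩
  let ι := {p : Fin d × Fin d // p ≠ (lst, lst)}
  let Ψ : Matrix (Fin d) (Fin d) ℂ →ₗ[ℝ] (ι → ℝ) :=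
    { toFun := fun B p => if p.1.1 < p.1.2 then (B p.1.1 p.1.2).re
        else if p.1.2 < p.1.1 then (B p.1.2 p.1.1).im else (B p.1.1 p.1.1).im
      map_add' := fun a b => by
        funext p
        by_cases h1 : p.1.1 < p.1.2 <;> by_cases h2 : p.1.2 < p.1.1 <;>
          simp [h1, h2, Matrix.add_apply]
      map_smul' := fun c a => by
        funext p
        by_cases h1 : p.1.1 < p.1.2 <;> by_cases h2 : p.1.2 < p.1.1 <;>
          simp [h1, h2, Matrix.smul_apply, Complex.smul_re, Complex.smul_im] }
  have hΨapply : ∀ (B : Matrix (Fin d) (Fin d) ℂ) (p : ι),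
      Ψ B p = (if p.1.1 < p.1.2 then (B p.1.1 p.1.2).re
        else if p.1.2 < p.1.1 then (B p.1.2 p.1.1).im else (B p.1.1 p.1.1).im) :=
    fun B p => rfl
  have hΨinj : Function.Injective (Ψ.comp SU.subtype) := by
    rw [← LinearMap.ker_eq_bot, LinearMap.ker_eq_bot']
    rintro ⟨B, hB1, hB2⟩ hB0
    have hp : ∀ p : ι, Ψ B p = 0 := by
      intro p
      have h := congrFun hB0 p
      simpa using h
    apply Subtype.ext
    show B = 0
    have hstarB : ∀ i j, (starRingEnd ℂ) (B j i) = -B i j := by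
      intro i j
      have h := congr_fun (congr_fun hB1 i) j
      simpa [Matrix.conjTranspose_apply, Matrix.neg_apply] using h
    have hc1 : ∀ i j : Fin d, i < j → B i j = 0 := by
      intro i j hij
      have hne1 : ((i, j) : Fin d × Fin d) ≠ (lst, lst) := by
        intro hcon
        rw [Prod.mk.injEq] at hcon
        exact absurd (hcon.1.trans hcon.2.symm) (ne_of_lt hij)
      have hne2 : ((j, i) : Fin d × Fin d) ≠ (lst, lst) := by
        intro hcon
        rw [Prod.mk.injEq] at hcon
        exact absurd (hcon.2.trans hcon.1.symm) (ne_of_lt hij)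
      have h1 := hp ⟨(i, j), hne1⟩
      have h2 := hp ⟨(j, i), hne2⟩
      rw [hΨapply] at h1 h2
      simp only [if_pos hij, if_neg (asymm hij), if_neg (lt_asymm hij)] at h1 h2
      exact Complex.ext h1 h2
    have hdre : ∀ i : Fin d, (B i i).re = 0 := by
      intro i
      have h := congrArg Complex.re (hstarB i i)
      simp only [Complex.conj_re, Complex.neg_re] at h
      linarith
    have hc2 : ∀ i : Fin d, i ≠ lst → B i i = 0 := by
      intro i hi
      have hnep : ((i, i) : Fin d × Fin d) ≠ (lst, lst) := by
        intro hcon; rw [Prod.mk.injEq] at hcon; exact hi hcon.1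
      have h := hp ⟨(i, i), hnep⟩
      rw [hΨapply] at h
      simp only [lt_irrefl, if_false] at h
      exact Complex.ext (hdre i) h
    have hlast : B lst lst = 0 := by
      have ht : ∑ k, B k k = 0 := by simpa [Matrix.trace, Matrix.diag] using hB2
      rw [Finset.sum_eq_single lst] at ht
      · exact ht
      · exact fun b _ hb => hc2 b hb
      · exact fun h => absurd (Finset.mem_univ lst) h
    ext i j
    simp only [Matrix.zero_apply]
    rcases lt_trichotomy i j with h | h | h
    · exact hc1 i j h
    · subst h
      by_cases hi : i = lst
      · rw [hi]; exact hlast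
      · exact hc2 i hi
    · have h2 := hstarB i j
      rw [hc1 j i h] at h2
      simp only [map_zero] at h2
      exact (neg_eq_zero.mp h2.symm)
  have hcard : Fintype.card ι = d * d - 1 := by
    have h1 : Fintype.card ι =
        Fintype.card (Fin d × Fin d) - Fintype.card {p : Fin d × Fin d // p = (lst, lst)} :=
      Fintype.card_subtype_compl _
    rw [Fintype.card_subtype_eq, Fintype.card_prod, Fintype.card_fin] at h1
    exact h1
  have hfinSU : Module.finrank ℝ SU ≤ d ^ 2 - 1 := by
    have h := LinearMap.finrank_le_finrank_of_injective hΨinj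
    rw [Module.finrank_fintype_fun_eq_card, hcard] at h
    calc Module.finrank ℝ SU ≤ d * d - 1 := h
      _ = d ^ 2 - 1 := by rw [pow_two]
  -- the span
  set S := Submodule.span ℝ (Set.range X) with hSdef
  have hS_le_SU : S ≤ SU := by
    rw [hSdef]
    apply Submodule.span_le.mpr
    rintro B ⟨j, rfl⟩
    exact ⟨hskew j, htr j⟩
  have hfinS : Module.finrank ℝ S ≤ d ^ 2 - 1 :=
    le_trans (Submodule.finrank_mono hS_le_SU) hfinSU
  -- build the point θ0
  obtain ⟨θ0, hθ0⟩ := (Submodule.mem_span_range_iff_exists_fun ℝ).mp (hspan A0 hA0skew hA0tr)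
  refine ⟨θ0, ?_⟩
  -- the linear parametrization
  let Llin : (Fin M → ℝ) →ₗ[ℝ] Matrix (Fin d) (Fin d) ℂ := Fintype.linearCombination ℝ X
  have hLlin_apply : ∀ y : Fin M → ℝ, Llin y = ∑ j, y j • X j := fun y => rfl
  have hLrange : LinearMap.range Llin = S := by
    apply le_antisymm
    · rintro B ⟨y, rfl⟩
      rw [hLlin_apply]
      exact (Submodule.mem_span_range_iff_exists_fun ℝ).mpr ⟨y, rfl⟩
    · rw [hSdef]
      apply Submodule.span_le.mpr
      rintro B ⟨j, rfl⟩
      exact ⟨Pi.single j 1, by simp [hLlin_apply, Pi.single_apply, ite_smul]⟩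
  let Lclm : (Fin M → ℝ) →L[ℝ] Matrix (Fin d) (Fin d) ℂ := LinearMap.toContinuousLinearMap Llin
  have hLθ0 : Lclm θ0 = A0 := by
    show Llin θ0 = A0
    rw [hLlin_apply]; exact hθ0
  have hfun : (fun θ : Fin M → ℝ => NormedSpace.exp (∑ j, θ j • X j)) =
      fun θ => E (Lclm θ) := by
    funext θ
    rw [hEC]
    congr 1
  have hfd : fderiv ℝ (fun θ : Fin M → ℝ => NormedSpace.exp (∑ j, θ j • X j)) θ0 =
      (fderiv ℝ E A0).comp Lclm := by
    rw [hfun]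
    have hl : HasFDerivAt E (fderiv ℝ E A0) (Lclm θ0) := by rw [hLθ0]; exact hDexp
    exact (hl.comp θ0 (Lclm.hasFDerivAt)).fderiv
  rw [hfd]
  -- rank computation
  let g : S →ₗ[ℝ] Matrix (Fin d) (Fin d) ℂ := (fderiv ℝ E A0).toLinearMap.comp S.subtype
  have hrange_eq : LinearMap.range (((fderiv ℝ E A0).comp Lclm).toLinearMap) =
      LinearMap.range g := by
    have hcl : ((Lclm : (Fin M → ℝ) →L[ℝ] Matrix (Fin d) (Fin d) ℂ) :
        (Fin M → ℝ) →ₗ[ℝ] Matrix (Fin d) (Fin d) ℂ) = Llin :=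
      LinearMap.coe_toContinuousLinearMap Llin
    show LinearMap.range ((fderiv ℝ E A0).toLinearMap.comp
        ((Lclm : (Fin M → ℝ) →L[ℝ] Matrix (Fin d) (Fin d) ℂ) :
          (Fin M → ℝ) →ₗ[ℝ] Matrix (Fin d) (Fin d) ℂ)) = LinearMap.range g
    rw [hcl, LinearMap.range_comp, hLrange, LinearMap.range_comp, Submodule.range_subtype]
  rw [hrange_eq]
  have hu'S : u' ∈ S := hspan u' hu'skew hu'tr
  have hker : 0 < Module.finrank ℝ (LinearMap.ker g) := by
    apply (Module.finrank_pos_iff (R := ℝ) (M := LinearMap.ker g)).mpr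
    have hmemk : (⟨u', hu'S⟩ : S) ∈ LinearMap.ker g := by
      show (fderiv ℝ E A0) u' = 0
      exact hkill
    refine ⟨⟨⟨⟨u', hu'S⟩, hmemk⟩, 0, ?_⟩⟩
    intro hcon
    apply hu'ne
    rw [Subtype.ext_iff] at hcon
    rw [Subtype.ext_iff] at hcon
    simpa using hcon
  have hrn := LinearMap.finrank_range_add_finrank_ker g
  omega
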